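/- arXiv:1605.04266 — 3 statements merged into one kernel-verified Lean document; each statement's English description precedes it below -/
import Mathlib

section
/- Let q be an indeterminate and for n ∈ Z set [n] = (q^n − q^{−n})/(q − q^{−1}). For integers λ1, λ2 and y ≥ 1, the identity [λ1 − y]·[λ2 − y] = [λ1]·[λ2] holds if and only if y = λ1 + λ2. -/
namespace Stmt8
noncomputable section

/-- The field ℚ(q). -/
abbrev K : Type := RatFunc ℚ

/-- The indeterminate q. -/
def qq : K := RatFunc.X

/-- The balanced quantum integer [n] = (q^n − q^{−n})/(q − q^{−1}). -/
def qint (n : ℤ) : K := (qq ^ n - qq ^ (-n)) / (qq - qq⁻¹)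

lemma qq_ne_zero : qq ≠ 0 := RatFunc.X_ne_zero

lemma qq_pow_ne_one {n : ℕ} (hn : n ≠ 0) : qq ^ n ≠ 1 := by
  intro h
  have hX : (Polynomial.X : Polynomial ℚ) ^ n = 1 := by
    apply IsFractionRing.injective (Polynomial ℚ) K
    simpa [qq, ← RatFunc.algebraMap_X, map_pow] using h
  have h2 := congrArg Polynomial.natDegree hX
  simp [Polynomial.natDegree_X_pow] at h2
  exact hn h2

lemma qq_zpow_eq_one_iff (k : ℤ) : qq ^ k = 1 ↔ k = 0 := by
  constructor
  · intro h
    by_contra hk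
    rcases lt_or_gt_of_ne hk with h1 | h1
    · have h3 : qq ^ (-k).toNat = 1 := by
        have h2 : qq ^ (-k) = 1 := by rw [zpow_neg, h, inv_one]
        rw [← zpow_natCast, Int.toNat_of_nonneg (by omega)]; exact h2
      exact qq_pow_ne_one (by omega) h3
    · have h3 : qq ^ k.toNat = 1 := by
        rw [← zpow_natCast, Int.toNat_of_nonneg (by omega)]; exact h
      exact qq_pow_ne_one (by omega) h3
  · rintro rfl; simp

lemma qq_zpow_inj {a b : ℤ} (h : qq ^ a = qq ^ b) : a = b := by
  have h1 : qq ^ (a - b) = 1 := by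
    rw [zpow_sub₀ qq_ne_zero, h, div_self (zpow_ne_zero _ qq_ne_zero)]
  have := (qq_zpow_eq_one_iff _).1 h1
  omega

/-- For integers λ1, λ2 and y ≥ 1, [λ1−y]·[λ2−y] = [λ1]·[λ2] iff y = λ1 + λ2. -/
theorem stmt8 (l1 l2 y : ℤ) (hy : 1 ≤ y) :
    qint (l1 - y) * qint (l2 - y) = qint l1 * qint l2 ↔ y = l1 + l2 := by
  have hq := qq_ne_zero
  have hD : qq - qq⁻¹ ≠ 0 := by
    intro h
    have h1 : qq = qq⁻¹ := by rwa [sub_eq_zero] at h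
    have h2 : qq ^ 2 = 1 := by
      rw [pow_two]; nth_rewrite 2 [h1]; exact mul_inv_cancel₀ hq
    exact qq_pow_ne_one two_ne_zero h2
  have hDD : (qq - qq⁻¹) * (qq - qq⁻¹) ≠ 0 := mul_ne_zero hD hD
  unfold qint
  rw [div_mul_div_comm, div_mul_div_comm, div_eq_div_iff hDD hDD,
    mul_left_inj' hDD, ← sub_eq_zero]
  have key : (qq ^ (l1 - y) - qq ^ (-(l1 - y))) * (qq ^ (l2 - y) - qq ^ (-(l2 - y))) -
      (qq ^ l1 - qq ^ (-l1)) * (qq ^ l2 - qq ^ (-l2)) =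
      (qq ^ (l1 + l2 - y - y) - qq ^ (l1 + l2)) *
        (1 - qq ^ (-(l1 + l2 - y - y) - (l1 + l2))) := by
    have h1 : qq ^ l1 ≠ 0 := zpow_ne_zero _ hq
    have h2 : qq ^ l2 ≠ 0 := zpow_ne_zero _ hq
    have h3 : qq ^ y ≠ 0 := zpow_ne_zero _ hq
    simp only [zpow_sub₀ hq, zpow_add₀ hq, zpow_neg]
    field_simp
    ring
  rw [key, mul_eq_zero]
  constructor
  · rintro (h | h)
    · rw [sub_eq_zero] at h
      have := qq_zpow_inj h
      omega
    · rw [sub_eq_zero, eq_comm, qq_zpow_eq_one_iff] at h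
      omega
  · intro h
    right
    rw [sub_eq_zero, eq_comm, qq_zpow_eq_one_iff]
    omega

end
end Stmt8
end

section
/- In the quantum group U_q(gl(2|1)) (standard datum: F_1 even, F_2 odd), let λ be a dominant weight with n = ⟨h_1, λ⟩ ≥ 0 and ⟨h_2, λ⟩ = −(n+1), and let V(λ) be the irreducible highest weight module with highest weight vector v_λ. Then for 1 ≤ r ≤ n one has the linear dependence F_2 F_1^{(r)} v_λ = ([n+1−r]/[n+1]) · F_1^{(r)} F_2 v_λ, and [n+1−r]/[n+1] ∈ q^r · 𝒜, where 𝒜 ⊂ Q(q) is the subring of rational functions without pole at q = 0. -/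
namespace Stmt13
noncomputable section

abbrev K : Type := RatFunc ℚ
def qq : K := RatFunc.X
def qint (n : ℤ) : K := (qq ^ n - qq ^ (-n)) / (qq - qq⁻¹)
def qfact (n : ℕ) : K := ∏ c ∈ Finset.range n, qint ((c : ℤ) + 1)

/-- f ∈ 𝒜, i.e. f ∈ ℚ(q) has no pole at q = 0. -/
def NoPole (g : K) : Prop :=
  ∃ a b : Polynomial ℚ, Polynomial.eval 0 b ≠ 0 ∧
    g = algebraMap (Polynomial ℚ) K a / algebraMap (Polynomial ℚ) K b

set_option synthInstance.maxHeartbeats 1000000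
set_option maxHeartbeats 4000000

lemma qq_ne_zero : qq ≠ 0 := RatFunc.X_ne_zero

lemma qq_pow_injective : Function.Injective (fun a : ℤ => qq ^ a) := by
  have key : ∀ a b : ℤ, b < a → qq ^ a = qq ^ b → False := by
    intro a b hab h
    have h1 : qq ^ (a - b) = 1 := by
      rw [zpow_sub₀ qq_ne_zero, h, div_self (zpow_ne_zero _ qq_ne_zero)]
    set k := a - b with hk
    have hkpos : 0 < k := by omega
    lift k to ℕ using hkpos.le with m hm
    rw [zpow_natCast] at h1
    have hX : (RatFunc.X : RatFunc ℚ) ^ m = 1 := h1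
    have h2 : (algebraMap (Polynomial ℚ) K) (Polynomial.X ^ m) = algebraMap (Polynomial ℚ) K 1 := by
      rw [map_pow, map_one, RatFunc.algebraMap_X, hX]
    have h3 : (Polynomial.X : Polynomial ℚ) ^ m = 1 := RatFunc.algebraMap_injective ℚ h2
    have hm0 : m ≠ 0 := by omega
    have := congrArg Polynomial.natDegree h3
    simp [Polynomial.natDegree_X_pow] at this
    omega
  intro a b h
  simp only at h
  rcases lt_trichotomy a b with hl | he | hl
  · exact absurd (key b a hl h.symm) (by simp)
  · exact he
  · exact absurd (key a b hl h) (by simp)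

lemma qq_zpow_ne (a b : ℤ) (h : a ≠ b) : qq ^ a ≠ qq ^ b :=
  fun hc => h (qq_pow_injective hc)

lemma mu_ne_zero : qq - qq⁻¹ ≠ 0 := by
  intro h
  have h2 : qq ^ (1:ℤ) = qq ^ (-1:ℤ) := by
    have := sub_eq_zero.mp h
    simpa [zpow_one, zpow_neg] using this
  exact qq_zpow_ne 1 (-1) (by norm_num) h2

lemma qint_ne_zero {m : ℤ} (h : m ≠ 0) : qint m ≠ 0 := by
  unfold qint
  apply div_ne_zero _ mu_ne_zero
  rw [sub_ne_zero]
  exact qq_zpow_ne _ _ (by omega)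

lemma qint_neg (m : ℤ) : qint (-m) = - qint m := by
  unfold qint; rw [neg_neg, ← neg_div, neg_sub]

lemma qint_mul_mu (x : ℤ) : qint x * (qq - qq⁻¹) = qq ^ x - qq ^ (-x) :=
  div_mul_cancel₀ _ mu_ne_zero

/-- the key q-identity for the sl2 commutator computation -/
lemma qint_comm_identity (a b : ℤ) :
    qint a * qint (b + 1 - a) + qint (b - 2*a) = qint (a + 1) * qint (b - a) := by
  have hq := qq_ne_zero
  have hmu := mu_ne_zero
  have hA : qq ^ a ≠ 0 := zpow_ne_zero _ hq
  have hB : qq ^ b ≠ 0 := zpow_ne_zero _ hq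
  refine mul_right_cancel₀ (b := (qq - qq⁻¹) * (qq - qq⁻¹)) (mul_ne_zero hmu hmu) ?_
  have lhs_eq : (qint a * qint (b+1-a) + qint (b-2*a)) * ((qq-qq⁻¹)*(qq-qq⁻¹))
      = (qint a * (qq-qq⁻¹)) * (qint (b+1-a) * (qq-qq⁻¹))
        + (qint (b-2*a) * (qq-qq⁻¹)) * (qq-qq⁻¹) := by ring
  have rhs_eq : (qint (a+1) * qint (b-a)) * ((qq-qq⁻¹)*(qq-qq⁻¹))
      = (qint (a+1)*(qq-qq⁻¹)) * (qint (b-a)*(qq-qq⁻¹)) := by ring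
  rw [lhs_eq, rhs_eq, qint_mul_mu, qint_mul_mu, qint_mul_mu, qint_mul_mu, qint_mul_mu]
  rw [show b + 1 - a = b + (-a) + 1 by ring, show -(b + (-a) + 1) = (-b) + a + (-1) by ring,
      show b - 2*a = b + (-a) + (-a) by ring, show -(b + (-a) + (-a)) = (-b) + a + a by ring,
      show -(a+1) = (-a) + (-1) by ring, show b - a = b + (-a) by ring,
      show -(b + (-a)) = (-b) + a by ring]
  simp only [zpow_add₀ hq, zpow_one, zpow_neg_one]
  ring

lemma qint_eq (e : ℤ) : qint e = (qq - qq⁻¹)⁻¹ * (qq ^ e - qq ^ (-e)) := by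
  unfold qint; rw [div_eq_inv_mul]

lemma qint_one : qint 1 = 1 := by
  unfold qint
  rw [zpow_one, show ((-1:ℤ)) = -(1:ℤ) by ring, zpow_neg, zpow_one]
  exact div_self mu_ne_zero

variable {V : Type} [AddCommGroup V] [Module K V]

/-- conjugation by the inverse -/
lemma conj_inv {Kk Lk A : Module.End K V} {c : K} (hc : c ≠ 0)
    (hKL : Kk * Lk = 1) (hLK : Lk * Kk = 1)
    (hrel : Kk * A = c • (A * Kk)) : Lk * A = c⁻¹ • (A * Lk) := by
  have h1 : A * Lk = c • (Lk * A) := by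
    calc A * Lk = (Lk * Kk) * (A * Lk) := by rw [hLK, one_mul]
    _ = Lk * ((Kk * A) * Lk) := by rw [mul_assoc, mul_assoc]
    _ = Lk * ((c • (A * Kk)) * Lk) := by rw [hrel]
    _ = c • (Lk * ((A * Kk) * Lk)) := by rw [smul_mul_assoc, mul_smul_comm]
    _ = c • (Lk * (A * (Kk * Lk))) := by rw [mul_assoc]
    _ = c • (Lk * A) := by rw [hKL, mul_one]
  rw [h1, smul_smul, inv_mul_cancel₀ hc, one_smul]

/-- eigenvalue of the inverse operator -/
lemma inv_eig {Kk Lk : Module.End K V} {c : K} {x : V} (hc : c ≠ 0)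
    (hLK : Lk * Kk = 1) (hx : Kk x = c • x) : Lk x = c⁻¹ • x := by
  have h1 : x = c • Lk x := by
    calc x = (Lk * Kk) x := by rw [hLK]; rfl
    _ = Lk (Kk x) := Module.End.mul_apply _ _ _
    _ = Lk (c • x) := by rw [hx]
    _ = c • Lk x := map_smul _ _ _
  have h2 := congrArg (fun y => c⁻¹ • y) h1
  simpa [smul_smul, inv_mul_cancel₀ hc] using h2.symm

/-- weight shift -/
lemma weight_shift {Kk F : Module.End K V} {c d : K} {x : V}
    (hrel : Kk * F = c • (F * Kk)) (hx : Kk x = d • x) : Kk (F x) = (c * d) • F x := by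
  calc Kk (F x) = (Kk * F) x := rfl
  _ = (c • (F * Kk)) x := by rw [hrel]
  _ = c • (F (Kk x)) := rfl
  _ = c • (F (d • x)) := by rw [hx]
  _ = (c * d) • F x := by rw [map_smul, smul_smul]

lemma weight_shift_pow {Kk F : Module.End K V} {c d : K} {x : V}
    (hrel : Kk * F = c • (F * Kk)) (hx : Kk x = d • x) (r : ℕ) :
    Kk ((F ^ r) x) = (c ^ r * d) • (F ^ r) x := by
  induction r with
  | zero => simpa using hx
  | succ r ih =>
      rw [pow_succ', Module.End.mul_apply, weight_shift hrel ih, ← Module.End.mul_apply,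
        ← pow_succ']
      congr 1
      ring

lemma commute_pow_apply {E F : Module.End K V} (h : E * F = F * E) (r : ℕ) (x : V) :
    E ((F ^ r) x) = (F ^ r) (E x) := by
  have hc : Commute F E := h.symm
  have h2 := (hc.pow_left r).symm
  calc E ((F ^ r) x) = (E * F ^ r) x := rfl
    _ = (F ^ r * E) x := by rw [h2]
    _ = (F ^ r) (E x) := rfl

lemma unsmul {A B : Module.End K V} {c : K} (hc : c ≠ 0) (h : A = c • B) : B = c⁻¹ • A := by
  rw [h, smul_smul, inv_mul_cancel₀ hc, one_smul]

lemma weight_shift_comm {Kk F : Module.End K V} {d : K} {x : V}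
    (hrel : Kk * F = F * Kk) (hx : Kk x = d • x) : Kk (F x) = d • F x := by
  calc Kk (F x) = (Kk * F) x := rfl
  _ = F (Kk x) := by rw [hrel]; rfl
  _ = d • F x := by rw [hx, map_smul]

lemma zpow_pow_eq (c : ℤ) (r : ℕ) (e : ℤ) (h : e = c * r) : (qq ^ c) ^ r = qq ^ e := by
  rw [← zpow_natCast (qq ^ c) r, ← zpow_mul, h]

/-- the sl2 lemma: action of E1 on F1-strings over a vector killed by E1 -/
lemma E1_pow_hw {E1 F1 K1 L1 : Module.End K V} {m : ℤ} {x : V}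
    (hK1L1 : K1 * L1 = 1) (hL1K1 : L1 * K1 = 1)
    (hK1F1 : K1 * F1 = (qq ^ (-2:ℤ)) • (F1 * K1))
    (hE1F1 : E1 * F1 - F1 * E1 = (qq - qq⁻¹)⁻¹ • (K1 - L1))
    (hE1x : E1 x = 0) (hK1x : K1 x = (qq ^ m) • x) :
    ∀ r : ℕ, E1 ((F1 ^ (r+1)) x) = (qint (r+1) * qint (m - r)) • (F1 ^ r) x := by
  have hq := qq_ne_zero
  have hL1F1 : L1 * F1 = (qq ^ (2:ℤ)) • (F1 * L1) := by
    have h := conj_inv (zpow_ne_zero _ hq) hK1L1 hL1K1 hK1F1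
    rwa [← zpow_neg, show -(-2:ℤ) = 2 by ring] at h
  have hL1x : L1 x = (qq ^ (-m)) • x := by
    have h := inv_eig (zpow_ne_zero m hq) hL1K1 hK1x
    rwa [← zpow_neg] at h
  have hK1pow : ∀ r : ℕ, K1 ((F1 ^ r) x) = (qq ^ (m - 2*r)) • (F1 ^ r) x := by
    intro r
    rw [weight_shift_pow hK1F1 hK1x r, zpow_pow_eq (-2) r (-2 * r) rfl, ← zpow_add₀ hq]
    try congr 2
    try ring
  have hL1pow : ∀ r : ℕ, L1 ((F1 ^ r) x) = (qq ^ (2*r - m)) • (F1 ^ r) x := by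
    intro r
    rw [weight_shift_pow hL1F1 hL1x r, zpow_pow_eq 2 r (2 * r) rfl, ← zpow_add₀ hq]
    try congr 2
    try ring
  have he1f1 : E1 * F1 = (qq - qq⁻¹)⁻¹ • (K1 - L1) + F1 * E1 := sub_eq_iff_eq_add.mp hE1F1
  have step : ∀ r : ℕ, E1 (F1 ((F1 ^ r) x)) =
      qint (m - 2*r) • (F1 ^ r) x + F1 (E1 ((F1 ^ r) x)) := by
    intro r
    calc E1 (F1 ((F1 ^ r) x)) = (E1 * F1) ((F1 ^ r) x) := rfl
    _ = ((qq - qq⁻¹)⁻¹ • (K1 - L1) + F1 * E1) ((F1 ^ r) x) := by rw [he1f1]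
    _ = (qq - qq⁻¹)⁻¹ • (K1 ((F1 ^ r) x) - L1 ((F1 ^ r) x)) + F1 (E1 ((F1 ^ r) x)) := by
        simp only [LinearMap.add_apply, LinearMap.smul_apply, LinearMap.sub_apply,
          Module.End.mul_apply]
    _ = qint (m - 2*r) • (F1 ^ r) x + F1 (E1 ((F1 ^ r) x)) := by
        rw [hK1pow, hL1pow, show (2*(r:ℤ) - m) = -(m - 2*r) by ring, ← sub_smul,
          smul_smul, ← qint_eq]
  intro r
  induction r with
  | zero =>
      have h0 : (F1 ^ (0:ℕ)) x = x := by simp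
      have h1 : E1 ((F1 ^ 1) x) = E1 (F1 ((F1 ^ (0:ℕ)) x)) := by rw [pow_one, h0]
      rw [h1, step 0, h0, hE1x, map_zero, add_zero]
      push_cast
      rw [qint_one, one_mul]
      try norm_num
  | succ r ih =>
      have h1 : E1 ((F1 ^ (r+2)) x) = E1 (F1 ((F1 ^ (r+1)) x)) := by
        rw [pow_succ' F1 (r+1)]; rfl
      rw [h1, step (r+1), ih, map_smul]
      have h2 : F1 ((F1 ^ r) x) = (F1 ^ (r+1)) x := by rw [pow_succ']; rfl
      rw [h2, ← add_smul]
      congr 1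
      have h3 := qint_comm_identity ((r:ℤ)+1) m
      rw [show m + 1 - ((r:ℤ)+1) = m - r by ring] at h3
      push_cast
      rw [show m - 2*((r:ℤ)+1) = m - 2*(r+1) by ring]
      linear_combination h3


lemma singular_vanish
    (E1 E2 F1 F2 K1 K2 L1 L2 : Module.End K V)
    (hK1L1 : K1 * L1 = 1) (hL1K1 : L1 * K1 = 1)
    (hK2L2 : K2 * L2 = 1) (hL2K2 : L2 * K2 = 1)
    (hKK : K1 * K2 = K2 * K1)
    (hK1E1 : K1 * E1 = (qq ^ (2 : ℤ)) • (E1 * K1))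
    (hK1E2 : K1 * E2 = (qq ^ (-1 : ℤ)) • (E2 * K1))
    (hK2E1 : K2 * E1 = (qq ^ (-1 : ℤ)) • (E1 * K2))
    (hK2E2 : K2 * E2 = E2 * K2)
    (hK1F1 : K1 * F1 = (qq ^ (-2 : ℤ)) • (F1 * K1))
    (hK1F2 : K1 * F2 = (qq ^ (1 : ℤ)) • (F2 * K1))
    (hK2F1 : K2 * F1 = (qq ^ (1 : ℤ)) • (F1 * K2))
    (hK2F2 : K2 * F2 = F2 * K2)
    (hE1F1 : E1 * F1 - F1 * E1 = (qq - qq⁻¹)⁻¹ • (K1 - L1))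
    (hE2F2 : E2 * F2 + F2 * E2 = (qq - qq⁻¹)⁻¹ • (K2 - L2))
    (hE1F2 : E1 * F2 = F2 * E1) (hE2F1 : E2 * F1 = F1 * E2)
    (hsimple : ∀ W : Submodule K V,
      (∀ x ∈ W, E1 x ∈ W ∧ E2 x ∈ W ∧ F1 x ∈ W ∧ F2 x ∈ W ∧
        K1 x ∈ W ∧ K2 x ∈ W ∧ L1 x ∈ W ∧ L2 x ∈ W) → W = ⊥ ∨ W = ⊤)
    (n : ℕ) (v : V) (hv : v ≠ 0)
    (hK1v : K1 v = (qq ^ (n : ℤ)) • v)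
    (hK2v : K2 v = (qq ^ (-(n : ℤ) - 1)) • v)
    (w : V) (aw bw : ℤ) (hab : -aw - 3*bw ≤ 2*(n:ℤ) + 2)
    (hK1w : K1 w = (qq ^ aw) • w) (hK2w : K2 w = (qq ^ bw) • w)
    (hE1w : E1 w = 0) (hE2w : E2 w = 0) : w = 0 := by
  have hq := qq_ne_zero
  by_contra hw
  -- inverse relations for L with F
  have hL1F1 : L1 * F1 = (qq ^ (2:ℤ)) • (F1 * L1) := by
    have h := conj_inv (zpow_ne_zero _ hq) hK1L1 hL1K1 hK1F1
    rwa [← zpow_neg, show -(-2:ℤ) = 2 by ring] at h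
  have hL1F2 : L1 * F2 = (qq ^ (-1:ℤ)) • (F2 * L1) := by
    have h := conj_inv (zpow_ne_zero _ hq) hK1L1 hL1K1 hK1F2
    rwa [← zpow_neg, show -(1:ℤ) = -1 by ring] at h
  have hL2F1 : L2 * F1 = (qq ^ (-1:ℤ)) • (F1 * L2) := by
    have h := conj_inv (zpow_ne_zero _ hq) hK2L2 hL2K2 hK2F1
    rwa [← zpow_neg, show -(1:ℤ) = -1 by ring] at h
  -- commutation of the E's past the generators
  have he1f1 : E1 * F1 = (qq - qq⁻¹)⁻¹ • (K1 - L1) + F1 * E1 := sub_eq_iff_eq_add.mp hE1F1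
  have he2f2 : E2 * F2 = (qq - qq⁻¹)⁻¹ • (K2 - L2) - F2 * E2 := eq_sub_of_add_eq hE2F2
  have he1k1 : E1 * K1 = (qq ^ (2:ℤ))⁻¹ • (K1 * E1) := unsmul (zpow_ne_zero _ hq) hK1E1
  have he2k1 : E2 * K1 = (qq ^ (-1:ℤ))⁻¹ • (K1 * E2) := unsmul (zpow_ne_zero _ hq) hK1E2
  have he1k2 : E1 * K2 = (qq ^ (-1:ℤ))⁻¹ • (K2 * E1) := unsmul (zpow_ne_zero _ hq) hK2E1
  have he2k2 : E2 * K2 = K2 * E2 := hK2E2.symm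
  have he1l1 : E1 * L1 = (qq ^ (2:ℤ)) • (L1 * E1) := by
    have h := conj_inv (zpow_ne_zero 2 hq) hK1L1 hL1K1 hK1E1
    have h2 := unsmul (inv_ne_zero (zpow_ne_zero 2 hq)) h
    rwa [inv_inv] at h2
  have he2l1 : E2 * L1 = (qq ^ (-1:ℤ)) • (L1 * E2) := by
    have h := conj_inv (zpow_ne_zero (-1) hq) hK1L1 hL1K1 hK1E2
    have h2 := unsmul (inv_ne_zero (zpow_ne_zero (-1) hq)) h
    rwa [inv_inv] at h2
  have he1l2 : E1 * L2 = (qq ^ (-1:ℤ)) • (L2 * E1) := by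
    have h := conj_inv (zpow_ne_zero (-1) hq) hK2L2 hL2K2 hK2E1
    have h2 := unsmul (inv_ne_zero (zpow_ne_zero (-1) hq)) h
    rwa [inv_inv] at h2
  have he2l2 : E2 * L2 = L2 * E2 := by
    have h := conj_inv (c := (1:K)) one_ne_zero hK2L2 hL2K2 (by simpa using hK2E2)
    rw [inv_one, one_smul] at h
    exact h.symm
  -- the generating set
  set Gset : Set (Module.End K V) := {F1, F2, K1, K2, L1, L2} with hGset
  set S : Set V := { y | ∃ l : List (Module.End K V), (∀ A ∈ l, A ∈ Gset) ∧ y = l.prod w }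
    with hS
  set W : Submodule K V := Submodule.span K S with hW
  have hwS : w ∈ S := ⟨[], by simp, by simp⟩
  have hwW : w ∈ W := Submodule.subset_span hwS
  have hSmem : ∀ l : List (Module.End K V), (∀ A ∈ l, A ∈ Gset) → l.prod w ∈ S :=
    fun l hl => ⟨l, hl, rfl⟩
  have hSop : ∀ B ∈ Gset, ∀ y ∈ S, B y ∈ S := by
    rintro B hB y ⟨l, hl, rfl⟩
    refine ⟨B :: l, ?_, ?_⟩
    · intro A hA
      rcases List.mem_cons.mp hA with h | h
      · rwa [h]
      · exact hl A h
    · rw [List.prod_cons]; rfl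
  have hWop : ∀ B ∈ Gset, ∀ y ∈ W, B y ∈ W := by
    intro B hB y hy
    refine Submodule.span_induction (p := fun y _ => B y ∈ W)
      (fun x hx => Submodule.subset_span (hSop B hB x hx))
      (by simpa using zero_mem W)
      (fun x y _ _ hx hy => by simpa [map_add] using add_mem hx hy)
      (fun a x _ hx => by simpa [map_smul] using Submodule.smul_mem W a hx) hy
  have hF1 : F1 ∈ Gset := by simp [hGset]
  have hF2 : F2 ∈ Gset := by simp [hGset]
  have hK1g : K1 ∈ Gset := by simp [hGset]
  have hK2g : K2 ∈ Gset := by simp [hGset]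
  have hL1g : L1 ∈ Gset := by simp [hGset]
  have hL2g : L2 ∈ Gset := by simp [hGset]
  -- closure of W under E1 and E2
  have hEkey : ∀ (E : Module.End K V), E w = 0 →
      (∀ y, y ∈ W → E y ∈ W → ∀ B ∈ Gset, E (B y) ∈ W) →
      ∀ l : List (Module.End K V), (∀ A ∈ l, A ∈ Gset) → E (l.prod w) ∈ W := by
    intro E hEw hstep l
    induction l with
    | nil =>
        intro _
        rw [List.prod_nil, Module.End.one_apply, hEw]
        exact zero_mem W
    | cons B l ih =>
        intro hmem
        have hl : ∀ A ∈ l, A ∈ Gset := fun A hA => hmem A (List.mem_cons_of_mem _ hA)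
        have hyW : l.prod w ∈ W := Submodule.subset_span (hSmem l hl)
        have hEy : E (l.prod w) ∈ W := ih hl
        rw [List.prod_cons, Module.End.mul_apply]
        exact hstep _ hyW hEy B (hmem B (List.mem_cons_self))
  have hstep1 : ∀ y, y ∈ W → E1 y ∈ W → ∀ B ∈ Gset, E1 (B y) ∈ W := by
    intro y hyW hEy B hB
    have happ : ∀ (A C : Module.End K V) (z : V), (A * C) z = A (C z) := fun _ _ _ => rfl
    rcases hB with h | h | h | h | h | h
    · rw [h, ← happ, he1f1]
      rw [LinearMap.add_apply, LinearMap.smul_apply, LinearMap.sub_apply, Module.End.mul_apply]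
      exact add_mem (Submodule.smul_mem W _ (sub_mem (hWop K1 hK1g y hyW) (hWop L1 hL1g y hyW)))
        (hWop F1 hF1 _ hEy)
    · rw [h, ← happ, hE1F2, Module.End.mul_apply]
      exact hWop F2 hF2 _ hEy
    · rw [h, ← happ, he1k1, LinearMap.smul_apply, Module.End.mul_apply]
      exact Submodule.smul_mem W _ (hWop K1 hK1g _ hEy)
    · rw [h, ← happ, he1k2, LinearMap.smul_apply, Module.End.mul_apply]
      exact Submodule.smul_mem W _ (hWop K2 hK2g _ hEy)
    · rw [h, ← happ, he1l1, LinearMap.smul_apply, Module.End.mul_apply]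
      exact Submodule.smul_mem W _ (hWop L1 hL1g _ hEy)
    · rw [Set.mem_singleton_iff] at h
      rw [h, ← happ, he1l2, LinearMap.smul_apply, Module.End.mul_apply]
      exact Submodule.smul_mem W _ (hWop L2 hL2g _ hEy)
  have hstep2 : ∀ y, y ∈ W → E2 y ∈ W → ∀ B ∈ Gset, E2 (B y) ∈ W := by
    intro y hyW hEy B hB
    have happ : ∀ (A C : Module.End K V) (z : V), (A * C) z = A (C z) := fun _ _ _ => rfl
    rcases hB with h | h | h | h | h | h
    · rw [h, ← happ, hE2F1, Module.End.mul_apply]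
      exact hWop F1 hF1 _ hEy
    · rw [h, ← happ, he2f2]
      rw [LinearMap.sub_apply, LinearMap.smul_apply, LinearMap.sub_apply, Module.End.mul_apply]
      exact sub_mem (Submodule.smul_mem W _ (sub_mem (hWop K2 hK2g y hyW) (hWop L2 hL2g y hyW)))
        (hWop F2 hF2 _ hEy)
    · rw [h, ← happ, he2k1, LinearMap.smul_apply, Module.End.mul_apply]
      exact Submodule.smul_mem W _ (hWop K1 hK1g _ hEy)
    · rw [h, ← happ, he2k2, Module.End.mul_apply]
      exact hWop K2 hK2g _ hEy
    · rw [h, ← happ, he2l1, LinearMap.smul_apply, Module.End.mul_apply]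
      exact Submodule.smul_mem W _ (hWop L1 hL1g _ hEy)
    · rw [Set.mem_singleton_iff] at h
      rw [h, ← happ, he2l2, Module.End.mul_apply]
      exact hWop L2 hL2g _ hEy
  have hE1W : ∀ y ∈ W, E1 y ∈ W := by
    intro y hy
    refine Submodule.span_induction (p := fun y _ => E1 y ∈ W)
      (fun x hx => ?_)
      (by simpa using zero_mem W)
      (fun x y _ _ hx hy => by simpa [map_add] using add_mem hx hy)
      (fun a x _ hx => by simpa [map_smul] using Submodule.smul_mem W a hx) hy
    obtain ⟨l, hl, rfl⟩ := hx
    exact hEkey E1 hE1w hstep1 l hl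
  have hE2W : ∀ y ∈ W, E2 y ∈ W := by
    intro y hy
    refine Submodule.span_induction (p := fun y _ => E2 y ∈ W)
      (fun x hx => ?_)
      (by simpa using zero_mem W)
      (fun x y _ _ hx hy => by simpa [map_add] using add_mem hx hy)
      (fun a x _ hx => by simpa [map_smul] using Submodule.smul_mem W a hx) hy
    obtain ⟨l, hl, rfl⟩ := hx
    exact hEkey E2 hE2w hstep2 l hl
  have hclosed : ∀ x ∈ W, E1 x ∈ W ∧ E2 x ∈ W ∧ F1 x ∈ W ∧ F2 x ∈ W ∧
      K1 x ∈ W ∧ K2 x ∈ W ∧ L1 x ∈ W ∧ L2 x ∈ W := by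
    intro x hx
    exact ⟨hE1W x hx, hE2W x hx, hWop F1 hF1 x hx, hWop F2 hF2 x hx,
      hWop K1 hK1g x hx, hWop K2 hK2g x hx, hWop L1 hL1g x hx, hWop L2 hL2g x hx⟩
  rcases hsimple W hclosed with hbot | htop
  · rw [hbot] at hwW
    exact hw (Submodule.mem_bot K |>.mp hwW)
  -- weight bookkeeping
  have hP : ∀ l : List (Module.End K V), (∀ A ∈ l, A ∈ Gset) →
      ∃ α β : ℤ, (-α - 3*β ≤ 2*(n:ℤ) + 2) ∧
        K1 (l.prod w) = (qq ^ α) • l.prod w ∧ K2 (l.prod w) = (qq ^ β) • l.prod w := by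
    intro l
    induction l with
    | nil =>
        intro _
        refine ⟨aw, bw, hab, ?_, ?_⟩ <;>
          simpa [List.prod_nil, Module.End.one_apply] using (by assumption)
    | cons B l ih =>
        intro hmem
        have hl : ∀ A ∈ l, A ∈ Gset := fun A hA => hmem A (List.mem_cons_of_mem _ hA)
        obtain ⟨α, β, hbd, h1, h2⟩ := ih hl
        have hB := hmem B (List.mem_cons_self)
        set y := l.prod w with hy
        have hprod : (B :: l).prod w = B y := by rw [List.prod_cons]; rfl
        rcases hB with h | h | h | h | h | h
        · refine ⟨α - 2, β + 1, by omega, ?_, ?_⟩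
          · rw [hprod, h, weight_shift hK1F1 h1, ← zpow_add₀ hq]
            norm_num
            rw [show (-2) + α = α - 2 by ring]
          · rw [hprod, h, weight_shift hK2F1 h2, ← zpow_add₀ hq]
            norm_num
            rw [show (1:ℤ) + β = β + 1 by ring]
        · refine ⟨α + 1, β, by omega, ?_, ?_⟩
          · rw [hprod, h, weight_shift hK1F2 h1, ← zpow_add₀ hq]
            norm_num
            rw [show (1:ℤ) + α = α + 1 by ring]
          · rw [hprod, h, weight_shift_comm hK2F2 h2]
        · refine ⟨α, β, hbd, ?_, ?_⟩
          · rw [hprod, h, h1, map_smul, h1]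
          · rw [hprod, h, ← Module.End.mul_apply, ← hKK, Module.End.mul_apply, h2, map_smul]
        · refine ⟨α, β, hbd, ?_, ?_⟩
          · rw [hprod, h, ← Module.End.mul_apply, hKK, Module.End.mul_apply, h1, map_smul]
          · rw [hprod, h, h2, map_smul, h2]
        · have hLy : L1 y = (qq ^ (-α)) • y := by
            have h := inv_eig (zpow_ne_zero α hq) hL1K1 h1
            rwa [← zpow_neg] at h
          refine ⟨α, β, hbd, ?_, ?_⟩
          · rw [hprod, h, hLy, map_smul, h1, smul_comm]
          · rw [hprod, h, hLy, map_smul, h2, smul_comm]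
        · rw [Set.mem_singleton_iff] at h
          have hLy : L2 y = (qq ^ (-β)) • y := by
            have h := inv_eig (zpow_ne_zero β hq) hL2K2 h2
            rwa [← zpow_neg] at h
          refine ⟨α, β, hbd, ?_, ?_⟩
          · rw [hprod, h, hLy, map_smul, h1, smul_comm]
          · rw [hprod, h, hLy, map_smul, h2, smul_comm]
  -- the grading operator
  set T : Module.End K V := L1 * (L2 * (L2 * L2)) with hT
  have hTeig : ∀ (y : V) (α β : ℤ), K1 y = (qq ^ α) • y → K2 y = (qq ^ β) • y →
      T y = (qq ^ (-α - 3*β)) • y := by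
    intro y α β h1 h2
    have hL1y : L1 y = (qq ^ (-α)) • y := by
      have h := inv_eig (zpow_ne_zero α hq) hL1K1 h1
      rwa [← zpow_neg] at h
    have hL2y : L2 y = (qq ^ (-β)) • y := by
      have h := inv_eig (zpow_ne_zero β hq) hL2K2 h2
      rwa [← zpow_neg] at h
    have : T y = L1 (L2 (L2 (L2 y))) := rfl
    rw [this, hL2y, map_smul, hL2y, smul_smul, map_smul, hL2y, smul_smul, map_smul, hL1y,
      smul_smul, ← zpow_add₀ hq, ← zpow_add₀ hq, ← zpow_add₀ hq]
    rw [show -β + -β + -β + -α = -α - 3*β by ring]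
  -- v is in W = ⊤, but lives in the wrong eigenspace of T
  set c0 : K := qq ^ (2*(n:ℤ) + 3) with hc0
  set Esup : Submodule K V := ⨆ (μ : K) (_ : μ ≠ c0), Module.End.eigenspace T μ with hEsup
  have hWsub : W ≤ Esup := by
    rw [hW]
    refine Submodule.span_le.mpr ?_
    rintro y ⟨l, hl, rfl⟩
    obtain ⟨α, β, hbd, h1, h2⟩ := hP l hl
    have heig : l.prod w ∈ Module.End.eigenspace T (qq ^ (-α - 3*β)) :=
      Module.End.mem_eigenspace_iff.mpr (hTeig _ α β h1 h2)
    have hne : (qq ^ (-α - 3*β) : K) ≠ c0 := qq_zpow_ne _ _ (by omega)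
    exact Submodule.mem_iSup_of_mem _ (Submodule.mem_iSup_of_mem hne heig)
  have hveig : v ∈ Module.End.eigenspace T c0 := by
    refine Module.End.mem_eigenspace_iff.mpr ?_
    have := hTeig v (n:ℤ) (-(n:ℤ) - 1) hK1v hK2v
    rwa [show -(n:ℤ) - 3*(-(n:ℤ) - 1) = 2*(n:ℤ) + 3 by ring] at this
  have hvsup : v ∈ Esup := hWsub (htop ▸ Submodule.mem_top)
  have hdisj := Module.End.eigenspaces_iSupIndep T c0
  have : v = 0 := by
    have h := (Submodule.disjoint_def.mp hdisj) v hveig hvsup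
    exact h
  exact hv this

lemma weight_shift_pow_z {Kk F : Module.End K V} {c d : ℤ} {x : V}
    (hrel : Kk * F = (qq ^ c) • (F * Kk)) (hx : Kk x = (qq ^ d) • x) (r : ℕ) (e : ℤ)
    (he : e = c * r + d) :
    Kk ((F ^ r) x) = (qq ^ e) • (F ^ r) x := by
  rw [weight_shift_pow hrel hx r, zpow_pow_eq c r (c * (r:ℤ)) rfl, ← zpow_add₀ qq_ne_zero, ← he]


/-- Let V be a ℚ(q)-representation ... -/
theorem stmt13
    (V : Type) [AddCommGroup V] [Module K V]
    (E1 E2 F1 F2 K1 K2 L1 L2 : Module.End K V)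
    (hK1L1 : K1 * L1 = 1) (hL1K1 : L1 * K1 = 1)
    (hK2L2 : K2 * L2 = 1) (hL2K2 : L2 * K2 = 1)
    (hKK : K1 * K2 = K2 * K1)
    (hK1E1 : K1 * E1 = (qq ^ (2 : ℤ)) • (E1 * K1))
    (hK1E2 : K1 * E2 = (qq ^ (-1 : ℤ)) • (E2 * K1))
    (hK2E1 : K2 * E1 = (qq ^ (-1 : ℤ)) • (E1 * K2))
    (hK2E2 : K2 * E2 = E2 * K2)
    (hK1F1 : K1 * F1 = (qq ^ (-2 : ℤ)) • (F1 * K1))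
    (hK1F2 : K1 * F2 = (qq ^ (1 : ℤ)) • (F2 * K1))
    (hK2F1 : K2 * F1 = (qq ^ (1 : ℤ)) • (F1 * K2))
    (hK2F2 : K2 * F2 = F2 * K2)
    (hE1F1 : E1 * F1 - F1 * E1 = (qq - qq⁻¹)⁻¹ • (K1 - L1))
    (hE2F2 : E2 * F2 + F2 * E2 = (qq - qq⁻¹)⁻¹ • (K2 - L2))
    (hE1F2 : E1 * F2 = F2 * E1) (hE2F1 : E2 * F1 = F1 * E2)
    (hF2sq : F2 * F2 = 0) (hE2sq : E2 * E2 = 0)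
    (hSerreF : F1 * F1 * F2 - (qq + qq⁻¹) • (F1 * F2 * F1) + F2 * F1 * F1 = 0)
    (hSerreE : E1 * E1 * E2 - (qq + qq⁻¹) • (E1 * E2 * E1) + E2 * E1 * E1 = 0)
    (hsimple : ∀ W : Submodule K V,
      (∀ x ∈ W, E1 x ∈ W ∧ E2 x ∈ W ∧ F1 x ∈ W ∧ F2 x ∈ W ∧
        K1 x ∈ W ∧ K2 x ∈ W ∧ L1 x ∈ W ∧ L2 x ∈ W) → W = ⊥ ∨ W = ⊤)
    (n : ℕ) (v : V) (hv : v ≠ 0)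
    (hE1v : E1 v = 0) (hE2v : E2 v = 0)
    (hK1v : K1 v = (qq ^ (n : ℤ)) • v)
    (hK2v : K2 v = (qq ^ (-(n : ℤ) - 1)) • v) :
    ∀ r : ℕ, 1 ≤ r → r ≤ n →
      (F2 * ((qfact r)⁻¹ • F1 ^ r)) v =
        (qint ((n : ℤ) + 1 - r) / qint ((n : ℤ) + 1)) • ((((qfact r)⁻¹ • F1 ^ r) * F2) v)
      ∧ ∃ g : K, qint ((n : ℤ) + 1 - r) / qint ((n : ℤ) + 1) = qq ^ r * g ∧ NoPole g := by
  have hq := qq_ne_zero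
  have hD : qint ((n:ℤ) + 1) ≠ 0 := qint_ne_zero (by omega)
  -- vector-level facts
  have hF2v_K1 : K1 (F2 v) = (qq ^ ((n:ℤ)+1)) • F2 v := by
    rw [weight_shift hK1F2 hK1v, ← zpow_add₀ hq, show (1:ℤ) + (n:ℤ) = (n:ℤ)+1 by ring]
  have hF2v_K2 : K2 (F2 v) = (qq ^ (-(n:ℤ)-1)) • F2 v := weight_shift_comm hK2F2 hK2v
  have hE1F2app : ∀ x : V, E1 (F2 x) = F2 (E1 x) := by
    intro x
    rw [← Module.End.mul_apply, hE1F2, Module.End.mul_apply]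
  have hE1F2v : E1 (F2 v) = 0 := by rw [hE1F2app, hE1v, map_zero]
  have hL2v : L2 v = (qq ^ ((n:ℤ)+1)) • v := by
    have h := inv_eig (zpow_ne_zero _ hq) hL2K2 hK2v
    rwa [← zpow_neg, show -(-(n:ℤ)-1) = (n:ℤ)+1 by ring] at h
  have hE2F2v : E2 (F2 v) = (-qint ((n:ℤ)+1)) • v := by
    have he2f2 : E2 * F2 = (qq - qq⁻¹)⁻¹ • (K2 - L2) - F2 * E2 := eq_sub_of_add_eq hE2F2
    calc E2 (F2 v) = (E2 * F2) v := rfl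
    _ = ((qq - qq⁻¹)⁻¹ • (K2 - L2) - F2 * E2) v := by rw [he2f2]
    _ = (qq - qq⁻¹)⁻¹ • (K2 v - L2 v) - F2 (E2 v) := by
        simp only [LinearMap.sub_apply, LinearMap.smul_apply, Module.End.mul_apply]
    _ = (qq - qq⁻¹)⁻¹ • ((qq ^ (-(n:ℤ)-1)) • v - (qq ^ ((n:ℤ)+1)) • v) := by
        rw [hK2v, hL2v, hE2v, map_zero, sub_zero]
    _ = (-qint ((n:ℤ)+1)) • v := by
        rw [← sub_smul, smul_smul, show -(n:ℤ)-1 = -((n:ℤ)+1) by ring, ← qint_neg,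
          qint_eq, neg_neg]
  -- the main induction
  have hMain : ∀ r : ℕ, r ≤ n →
      F2 ((F1 ^ r) v) = (qint ((n:ℤ)+1-r) / qint ((n:ℤ)+1)) • (F1 ^ r) (F2 v) := by
    intro r
    induction r with
    | zero =>
        intro _
        simp only [pow_zero, Module.End.one_apply, Nat.cast_zero, sub_zero]
        rw [div_self hD, one_smul]
    | succ r ih =>
        intro hrn
        have ihr := ih (by omega)
        rw [show (n:ℤ)+1-((r+1 : ℕ):ℤ) = (n:ℤ)-r by push_cast; ring]
        set c : K := qint ((n:ℤ)-r) / qint ((n:ℤ)+1) with hc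
        set w : V := F2 ((F1 ^ (r+1)) v) - c • (F1 ^ (r+1)) (F2 v) with hwdef
        -- weights of the two terms
        have hK1u : K1 ((F1 ^ (r+1)) v) = (qq ^ ((n:ℤ)-2*r-2)) • (F1 ^ (r+1)) v :=
          weight_shift_pow_z hK1F1 hK1v (r+1) _ (by push_cast; ring)
        have hK2u : K2 ((F1 ^ (r+1)) v) = (qq ^ ((r:ℤ)-n)) • (F1 ^ (r+1)) v :=
          weight_shift_pow_z hK2F1 hK2v (r+1) _ (by push_cast; ring)
        have hL2u : L2 ((F1 ^ (r+1)) v) = (qq ^ ((n:ℤ)-r)) • (F1 ^ (r+1)) v := by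
          have h := inv_eig (zpow_ne_zero _ hq) hL2K2 hK2u
          rwa [← zpow_neg, show -((r:ℤ)-n) = (n:ℤ)-r by ring] at h
        have hE2u : E2 ((F1 ^ (r+1)) v) = 0 := by
          rw [commute_pow_apply hE2F1, hE2v, map_zero]
        have hK1t1 : K1 (F2 ((F1 ^ (r+1)) v)) = (qq ^ ((n:ℤ)-2*r-1)) • F2 ((F1 ^ (r+1)) v) := by
          rw [weight_shift hK1F2 hK1u, ← zpow_add₀ hq,
            show (1:ℤ) + ((n:ℤ)-2*r-2) = (n:ℤ)-2*r-1 by ring]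
        have hK1t2 : K1 ((F1 ^ (r+1)) (F2 v)) = (qq ^ ((n:ℤ)-2*r-1)) • (F1 ^ (r+1)) (F2 v) :=
          weight_shift_pow_z hK1F1 hF2v_K1 (r+1) _ (by push_cast; ring)
        have hK2t1 : K2 (F2 ((F1 ^ (r+1)) v)) = (qq ^ ((r:ℤ)-n)) • F2 ((F1 ^ (r+1)) v) :=
          weight_shift_comm hK2F2 hK2u
        have hK2t2 : K2 ((F1 ^ (r+1)) (F2 v)) = (qq ^ ((r:ℤ)-n)) • (F1 ^ (r+1)) (F2 v) :=
          weight_shift_pow_z hK2F1 hF2v_K2 (r+1) _ (by push_cast; ring)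
        have hK1w : K1 w = (qq ^ ((n:ℤ)-2*r-1)) • w := by
          rw [hwdef, map_sub, map_smul, hK1t1, hK1t2, smul_comm c, ← smul_sub]
        have hK2w : K2 w = (qq ^ ((r:ℤ)-n)) • w := by
          rw [hwdef, map_sub, map_smul, hK2t1, hK2t2, smul_comm c, ← smul_sub]
        -- E1 kills w
        have hA := E1_pow_hw hK1L1 hL1K1 hK1F1 hE1F1 hE1v hK1v r
        have hB := E1_pow_hw hK1L1 hL1K1 hK1F1 hE1F1 hE1F2v hF2v_K1 r
        rw [show ((n:ℤ)+1) - (r:ℤ) = (n:ℤ)+1-r by ring] at hB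
        have hE1w : E1 w = 0 := by
          rw [hwdef, map_sub, map_smul, hE1F2app, hA, hB, map_smul, ihr, smul_smul, smul_smul,
            ← sub_smul]
          rw [show qint (↑r+1) * qint ((n:ℤ)-↑r) * (qint ((n:ℤ)+1-↑r) / qint ((n:ℤ)+1))
              - c * (qint (↑r+1) * qint ((n:ℤ)+1-↑r)) = 0 by rw [hc]; ring, zero_smul]
        -- E2 kills w
        have hE2t1 : E2 (F2 ((F1 ^ (r+1)) v)) = (-qint ((n:ℤ)-r)) • (F1 ^ (r+1)) v := by
          have he2f2 : E2 * F2 = (qq - qq⁻¹)⁻¹ • (K2 - L2) - F2 * E2 := eq_sub_of_add_eq hE2F2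
          calc E2 (F2 ((F1 ^ (r+1)) v)) = (E2 * F2) ((F1 ^ (r+1)) v) := rfl
          _ = ((qq - qq⁻¹)⁻¹ • (K2 - L2) - F2 * E2) ((F1 ^ (r+1)) v) := by rw [he2f2]
          _ = (qq - qq⁻¹)⁻¹ • (K2 ((F1 ^ (r+1)) v) - L2 ((F1 ^ (r+1)) v))
              - F2 (E2 ((F1 ^ (r+1)) v)) := by
              simp only [LinearMap.sub_apply, LinearMap.smul_apply, Module.End.mul_apply]
          _ = (qq - qq⁻¹)⁻¹ • ((qq ^ ((r:ℤ)-n)) • (F1 ^ (r+1)) v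
              - (qq ^ ((n:ℤ)-r)) • (F1 ^ (r+1)) v) := by
              rw [hK2u, hL2u, hE2u, map_zero, sub_zero]
          _ = (-qint ((n:ℤ)-r)) • (F1 ^ (r+1)) v := by
              rw [← sub_smul, smul_smul, show (r:ℤ)-n = -((n:ℤ)-r) by ring, ← qint_neg,
                qint_eq, neg_neg]
        have hE2t2 : E2 ((F1 ^ (r+1)) (F2 v)) = (-qint ((n:ℤ)+1)) • (F1 ^ (r+1)) v := by
          rw [commute_pow_apply hE2F1, hE2F2v, map_smul]
        have hE2w : E2 w = 0 := by
          rw [hwdef, map_sub, map_smul, hE2t1, hE2t2, smul_smul, ← sub_smul]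
          rw [show -qint ((n:ℤ)-r) - c * -qint ((n:ℤ)+1) = 0 by
            rw [hc, mul_neg, div_mul_cancel₀ _ hD, sub_neg_eq_add, neg_add_cancel], zero_smul]
        -- the singular vector vanishes
        have hw0 : w = 0 := by
          refine singular_vanish E1 E2 F1 F2 K1 K2 L1 L2 hK1L1 hL1K1 hK2L2 hL2K2 hKK
            hK1E1 hK1E2 hK2E1 hK2E2 hK1F1 hK1F2 hK2F1 hK2F2 hE1F1 hE2F2 hE1F2 hE2F1
            hsimple n v hv hK1v hK2v w ((n:ℤ)-2*r-1) ((r:ℤ)-n) (by omega) hK1w hK2w hE1w hE2w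
        rw [hwdef, sub_eq_zero] at hw0
        exact hw0
  -- conclusion
  intro r hr1 hrn
  constructor
  · have h := hMain r hrn
    simp only [Module.End.mul_apply, LinearMap.smul_apply, map_smul]
    rw [h, smul_comm]
  · -- the explicit q-adic form of the coefficient
    have h1 : ∀ m : ℤ, qq ^ m - qq ^ (-m) = qq ^ (-m) * (qq ^ (2*m) - 1) := by
      intro m
      rw [mul_sub, ← zpow_add₀ hq, mul_one, show -m + 2*m = m by ring]
    have hB2 : (qq ^ (2*((n:ℤ)+1)) - 1 : K) ≠ 0 := by
      rw [sub_ne_zero, show (1:K) = qq ^ (0:ℤ) by rw [zpow_zero]]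
      exact qq_zpow_ne _ _ (by omega)
    have key : qint ((n:ℤ)+1-r) / qint ((n:ℤ)+1)
        = qq ^ (r:ℤ) * ((qq ^ (2*((n:ℤ)+1-r)) - 1)/(qq ^ (2*((n:ℤ)+1)) - 1)) := by
      unfold qint
      rw [div_div_div_comm, div_self mu_ne_zero, div_one, h1 ((n:ℤ)+1-r), h1 ((n:ℤ)+1),
        mul_div_mul_comm, ← zpow_sub₀ hq, show -((n:ℤ)+1-r) - -((n:ℤ)+1) = (r:ℤ) by ring]
    refine ⟨(qq ^ (2*((n:ℤ)+1-r)) - 1)/(qq ^ (2*((n:ℤ)+1)) - 1), ?_, ?_⟩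
    · rw [key, zpow_natCast]
    · refine ⟨Polynomial.X ^ (2*(n+1-r)) - 1, Polynomial.X ^ (2*(n+1)) - 1, ?_, ?_⟩
      · simp only [Polynomial.eval_sub, Polynomial.eval_pow, Polynomial.eval_X,
          Polynomial.eval_one, zero_pow (by omega : 2*(n+1) ≠ 0)]
        norm_num
      · rw [map_sub, map_sub, map_pow, map_pow, map_one, RatFunc.algebraMap_X]
        have hqx : (RatFunc.X : K) = qq := rfl
        rw [hqx, ← zpow_natCast qq (2*(n+1-r)), ← zpow_natCast qq (2*(n+1))]
        rw [show ((2*(n+1-r) : ℕ) : ℤ) = 2*((n:ℤ)+1-r) by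
              push_cast [Nat.cast_sub (by omega : r ≤ n+1)]; ring,
            show ((2*(n+1) : ℕ) : ℤ) = 2*((n:ℤ)+1) by push_cast; ring]

end
end Stmt13
end

section
/- Let λ = a ε_1 + b ε_2 + c ε_3 ∈ P for quantum gl(2|1) with the non-standard simple system α_1 = ε_1 − ε_3, α_2 = ε_3 − ε_2 (both isotropic, so F_1^2 = F_2^2 = 0), and set λ(i) = ⟨h_i, λ⟩. Then in the Verma module M(λ), a vector of the form c(F_1F_2)^y 1_λ + d(F_2F_1)^y 1_λ with y ≥ 1 and (c,d) ≠ (0,0), c,d both nonzero, is singular (killed by E_1 and E_2) if and only if y = λ(1) + λ(2) and c[λ(2)] = −d[λ(1)]. -/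
namespace Stmt19
noncomputable section

abbrev K : Type := RatFunc ℚ
def qq : K := RatFunc.X
def qint (n : ℤ) : K := (qq ^ n - qq ^ (-n)) / (qq - qq⁻¹)

/-- The Verma module M(λ) for the non-standard (two isotropic roots) quantum gl(2|1):
basis F₁^x (F₂F₁)^y F₂^z 1_λ indexed by (x, y, z) ∈ Bool × ℕ × Bool. -/
abbrev V : Type := (Bool × ℕ × Bool) →₀ K

/-- Basis vector F₁^x (F₂F₁)^y F₂^z 1_λ. -/
def bas (t : Bool × ℕ × Bool) : V := Finsupp.single t 1

/-- Action of E₁ on M(λ), where λ(1) = l1: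
E₁ F₁^x(F₂F₁)^y F₂^z 1 = δ_{x,1}[λ(1)−y−z](F₂F₁)^yF₂^z 1
+ δ_{z,0}(−1)^{x+1}[λ(1)]F₁^x(F₂F₁)^{y−1}F₂ 1. -/
def E1a (l1 : ℤ) (v : V) : V :=
  v.sum fun t cc => cc •
    ((if t.1 = true then
        qint (l1 - t.2.1 - (if t.2.2 then 1 else 0)) • bas (false, t.2.1, t.2.2)
      else 0) +
     (if t.2.2 = false ∧ 1 ≤ t.2.1 then
        (((-1 : K) ^ (if t.1 then 2 else 1)) * qint l1) • bas (t.1, t.2.1 - 1, true)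
      else 0))

/-- Action of E₂ on M(λ), where λ(2) = l2:
E₂ F₁^x(F₂F₁)^y F₂^z 1 = δ_{x,0}[λ(2)−y]F₁(F₂F₁)^{y−1}F₂^z 1
+ δ_{z,1}(−1)^x[λ(2)]F₁^x(F₂F₁)^y 1. -/
def E2a (l2 : ℤ) (v : V) : V :=
  v.sum fun t cc => cc •
    ((if t.1 = false ∧ 1 ≤ t.2.1 then
        qint (l2 - t.2.1) • bas (true, t.2.1 - 1, t.2.2)
      else 0) +
     (if t.2.2 = true then
        (((-1 : K) ^ (if t.1 then 1 else 0)) * qint l2) • bas (t.1, t.2.1, false)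
      else 0))

lemma qq_ne_zero : (qq : K) ≠ 0 := RatFunc.X_ne_zero

lemma intDegree_pow (n : ℕ) : ((qq : K)^n).intDegree = n := by
  induction n with
  | zero => simp [RatFunc.intDegree_one]
  | succ k ih =>
    rw [pow_succ, RatFunc.intDegree_mul (pow_ne_zero _ qq_ne_zero) qq_ne_zero, ih]
    have : (qq : K).intDegree = 1 := RatFunc.intDegree_X
    rw [this]; push_cast; ring

lemma intDegree_zpow (k : ℤ) : ((qq : K)^k).intDegree = k := by
  rcases k with n | n
  · simpa using intDegree_pow n
  · have h1 : ((qq : K)^(n+1)) * ((qq:K)^(Int.negSucc n)) = 1 := by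
      rw [← zpow_natCast, ← zpow_add₀ qq_ne_zero]
      have : (((n+1 : ℕ):ℤ) + Int.negSucc n) = 0 := by rw [Int.negSucc_eq]; push_cast; ring
      rw [this, zpow_zero]
    have h2 := RatFunc.intDegree_mul (pow_ne_zero (n+1) qq_ne_zero)
      (zpow_ne_zero (Int.negSucc n) qq_ne_zero (a := qq))
    rw [h1, RatFunc.intDegree_one, intDegree_pow] at h2
    rw [Int.negSucc_eq] at h2 ⊢
    push_cast at h2 ⊢
    omega

lemma zpow_inj {a b : ℤ} (h : (qq : K)^a = (qq:K)^b) : a = b := by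
  have := intDegree_zpow a
  rw [h, intDegree_zpow] at this
  omega

lemma fkey (m n : ℤ) : (qq:K)^m + qq^(-m) = qq^n + qq^(-n) ↔ (m = n ∨ m = -n) := by
  have hu : (qq:K)^m ≠ 0 := zpow_ne_zero _ qq_ne_zero
  have hv : (qq:K)^n ≠ 0 := zpow_ne_zero _ qq_ne_zero
  have expand : (qq:K)^(-m) * ((qq^m - qq^n) * (qq^m - qq^(-n)))
      = (qq^m + qq^(-m)) - (qq^n + qq^(-n)) := by
    rw [zpow_neg, zpow_neg]
    generalize (qq:K)^m = u at hu ⊢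
    generalize (qq:K)^n = v at hv ⊢
    field_simp
    ring
  constructor
  · intro h
    have h0 : ((qq:K)^m - qq^n) * (qq^m - qq^(-n)) = 0 := by
      have : (qq:K)^(-m) * ((qq^m - qq^n) * (qq^m - qq^(-n))) = 0 := by
        rw [expand, h, sub_self]
      exact (mul_eq_zero.1 this).resolve_left (zpow_ne_zero _ qq_ne_zero)
    rcases mul_eq_zero.1 h0 with h1 | h1
    · exact Or.inl (zpow_inj (sub_eq_zero.1 h1))
    · exact Or.inr (zpow_inj (sub_eq_zero.1 h1))
  · rintro (rfl | rfl)
    · rfl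
    · rw [neg_neg]; ring

lemma qsub_ne_zero : (qq : K) - qq⁻¹ ≠ 0 := by
  intro h
  have h2 : (qq:K)^(2:ℤ) = (qq:K)^(0:ℤ) := by
    have hq := qq_ne_zero
    have : (qq:K) = qq⁻¹ := sub_eq_zero.1 h
    rw [zpow_two, zpow_zero]
    nth_rewrite 2 [this]
    field_simp
  have := zpow_inj h2
  omega

lemma qint_mul (n : ℤ) : qint n * (qq - qq⁻¹) = qq^n - qq^(-n) :=
  div_mul_cancel₀ _ qsub_ne_zero

lemma qint_neg (n : ℤ) : qint (-n) = - qint n := by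
  rw [qint, qint, neg_neg, ← neg_div, neg_sub]

lemma qint_eq_zero_iff (n : ℤ) : qint n = 0 ↔ n = 0 := by
  rw [qint, div_eq_zero_iff]
  constructor
  · rintro (h | h)
    · have := zpow_inj (sub_eq_zero.1 h); omega
    · exact absurd h qsub_ne_zero
  · rintro rfl; simp

lemma prod_iff (l1 l2 y : ℤ) :
    qint (l1 - y) * qint (l2 - y) = qint l1 * qint l2 ↔ (y = 0 ∨ y = l1 + l2) := by
  have hD := qsub_ne_zero
  have hDD : ((qq:K) - qq⁻¹) * (qq - qq⁻¹) ≠ 0 := mul_ne_zero hD hD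
  have step1 : qint (l1-y) * qint (l2-y) = qint l1 * qint l2 ↔
      (qint (l1-y)*(qq-qq⁻¹)) * (qint (l2-y)*(qq-qq⁻¹)) =
      (qint l1*(qq-qq⁻¹))*(qint l2*(qq-qq⁻¹)) := by
    rw [mul_mul_mul_comm, mul_mul_mul_comm (qint l1)]
    exact (mul_left_injective₀ hDD).eq_iff.symm
  have hP : (qq:K)^l1 ≠ 0 := zpow_ne_zero _ qq_ne_zero
  have hR : (qq:K)^l2 ≠ 0 := zpow_ne_zero _ qq_ne_zero
  have hW : (qq:K)^y ≠ 0 := zpow_ne_zero _ qq_ne_zero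
  have step2 : ((qq:K)^(l1-y) - qq^(-(l1-y)))*(qq^(l2-y) - qq^(-(l2-y)))
      - (qq^l1 - qq^(-l1))*(qq^l2 - qq^(-l2))
      = (qq^(l1+l2-2*y) + qq^(-(l1+l2-2*y))) - (qq^(l1+l2) + qq^(-(l1+l2))) := by
    rw [show -(l1-y) = y-l1 from by ring, show -(l2-y) = y-l2 from by ring,
      show -(l1+l2-2*y) = (y+y)-(l1+l2) from by ring,
      show l1+l2-2*y = (l1+l2)-(y+y) from by ring]
    simp only [zpow_sub₀ qq_ne_zero, zpow_add₀ qq_ne_zero, zpow_neg]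
    field_simp
    ring
  have step3 : qint (l1-y) * qint (l2-y) = qint l1 * qint l2 ↔
      (qq:K)^(l1+l2-2*y) + qq^(-(l1+l2-2*y)) = qq^(l1+l2) + qq^(-(l1+l2)) := by
    rw [step1, qint_mul, qint_mul, qint_mul, qint_mul, ← sub_eq_zero, step2, sub_eq_zero]
  rw [step3, fkey]
  omega

lemma E1a_eval (l1 : ℤ) (y : ℕ) (hy : 1 ≤ y) (c d : K) :
    E1a l1 (Finsupp.single (true, y-1, true) c + Finsupp.single (false, y, false) d)
      = Finsupp.single (false, y-1, true) (c * qint (l1 - y) - d * qint l1) := by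
  rw [E1a, Finsupp.sum_add_index' ?h0 ?hadd]
  case h0 => intro t; exact zero_smul K _
  case hadd => intro t a b; exact add_smul a b _
  rw [Finsupp.sum_single_index ?z1, Finsupp.sum_single_index ?z2]
  case z1 => exact zero_smul K _
  case z2 => exact zero_smul K _
  simp only [if_true, if_false, bas]
  norm_num [hy]
  rw [show l1 - ((y:ℤ) - 1) - 1 = l1 - y from by ring]
  abel

lemma E2a_eval (l2 : ℤ) (y : ℕ) (hy : 1 ≤ y) (c d : K) :
    E2a l2 (Finsupp.single (true, y-1, true) c + Finsupp.single (false, y, false) d)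
      = Finsupp.single (true, y-1, false) (d * qint (l2 - y) - c * qint l2) := by
  rw [E2a, Finsupp.sum_add_index' ?h0 ?hadd]
  case h0 => intro t; exact zero_smul K _
  case hadd => intro t a b; exact add_smul a b _
  rw [Finsupp.sum_single_index ?z1, Finsupp.sum_single_index ?z2]
  case z1 => exact zero_smul K _
  case z2 => exact zero_smul K _
  simp only [if_true, if_false, bas]
  norm_num [hy]
  abel


/-- A vector c(F₁F₂)^y 1_λ + d(F₂F₁)^y 1_λ with y ≥ 1 and c, d both nonzero is
singular (killed by E₁ and E₂) iff y = λ(1) + λ(2) and c[λ(2)] = −d[λ(1)].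
Here (F₁F₂)^y = F₁(F₂F₁)^{y−1}F₂ corresponds to the basis index (true, y−1, true)
and (F₂F₁)^y to (false, y, false). -/
theorem stmt19 (l1 l2 : ℤ) (y : ℕ) (hy : 1 ≤ y) (c d : K) (hc : c ≠ 0) (hd : d ≠ 0) :
    (E1a l1 (Finsupp.single (true, y - 1, true) c + Finsupp.single (false, y, false) d) = 0 ∧
     E2a l2 (Finsupp.single (true, y - 1, true) c + Finsupp.single (false, y, false) d) = 0)
    ↔ ((y : ℤ) = l1 + l2 ∧ c * qint l2 = -(d * qint l1)) := by
  rw [E1a_eval l1 y hy c d, E2a_eval l2 y hy c d, Finsupp.single_eq_zero,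
    Finsupp.single_eq_zero, sub_eq_zero, sub_eq_zero]
  constructor
  · rintro ⟨h1, h2⟩
    have hcd : c * d ≠ 0 := mul_ne_zero hc hd
    have hmul : (c*d) * (qint (l1 - y) * qint (l2 - y)) = (c*d) * (qint l1 * qint l2) := by
      calc (c*d) * (qint (l1-y) * qint (l2-y)) = (c * qint (l1-y)) * (d * qint (l2-y)) := by
            ring
        _ = (d * qint l1) * (c * qint l2) := by rw [h1, h2]
        _ = (c*d) * (qint l1 * qint l2) := by ring
    have hp := (prod_iff l1 l2 y).1 (mul_left_cancel₀ hcd hmul)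
    have hyl : (y:ℤ) = l1 + l2 := by
      rcases hp with h | h
      · omega
      · exact h
    refine ⟨hyl, ?_⟩
    have e1 : l1 - (y:ℤ) = -l2 := by omega
    rw [e1, qint_neg] at h1
    linear_combination -h1
  · rintro ⟨hyl, heq⟩
    have e1 : l1 - (y:ℤ) = -l2 := by omega
    have e2 : l2 - (y:ℤ) = -l1 := by omega
    rw [e1, qint_neg, e2, qint_neg]
    exact ⟨by linear_combination -heq, by linear_combination -heq⟩


end
end Stmt19
end
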